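/- Let w be the infinite binary string 1¹0¹1²0²1³0³… (the concatenation, over j ≥ 1, of j ones followed by j zeros), let n be divisible by 4, and let ν be the prefix of w of length n/4. Let k > 2 be even with n > 4(18k+1)(18k+2), let x be a binary string of length n/4 with HAM(x,ν) = k/2, let y be a binary string of length n/4 with HAM(x,y) ≤ k/2 + 1, and let S = x ∘ y ∘ x ∘ x, a string of length n. Then for every integer p with 1 ≤ p < n/4, the number of indices z with 1 ≤ z ≤ n−p and S[z] ≠ S[z+p] exceeds k; consequently, every k-period of S is at least n/4. -/

import Mathlib

/-- The infinite binary string `1¹0¹1²0²1³0³…` (1-indexed): block `j ≥ 1` occupies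
positions `(j-1)j + 1, …, j(j+1)`, with its first `j` positions (up to `j²`) equal
to `1` and the rest equal to `0`. -/
def infw (z : ℕ) : Bool :=
  (Finset.Icc 1 z).filter (fun j => j * (j - 1) < z ∧ z ≤ j * j) |>.Nonempty |> decide

/-- Hamming distance between the length-`ℓ` strings `u[1..ℓ]` and `v[1..ℓ]`. -/
def ham (u v : ℕ → Bool) (ℓ : ℕ) : ℕ :=
  ((Finset.Icc 1 ℓ).filter fun z => u z ≠ v z).card

lemma infw_eq_true {j z : ℕ} (hj : 1 ≤ j) (h1 : j * (j - 1) < z) (h2 : z ≤ j * j) :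
    infw z = true := by
  unfold infw
  rw [decide_eq_true_eq]
  refine ⟨j, Finset.mem_filter.mpr ⟨Finset.mem_Icc.mpr ⟨hj, ?_⟩, h1, h2⟩⟩
  have : j - 1 ≤ j * (j - 1) := Nat.le_mul_of_pos_left _ hj
  omega

lemma infw_eq_false {j z : ℕ} (h1 : j * j < z) (h2 : z ≤ j * (j + 1)) :
    infw z = false := by
  unfold infw
  rw [decide_eq_false_iff_not]
  rintro ⟨i, hi⟩
  simp only [Finset.mem_filter, Finset.mem_Icc] at hi
  obtain ⟨⟨hi1, _⟩, hlt, hle⟩ := hi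
  have hij : j < i := by nlinarith
  have h3 : (j + 1) * j ≤ i * (i - 1) := by
    calc (j + 1) * j ≤ i * j := Nat.mul_le_mul_right _ hij
    _ ≤ i * (i - 1) := Nat.mul_le_mul_left _ (by omega)
  nlinarith [h3, h2, hlt]

lemma infw_bad {j p : ℕ} (hj : 1 ≤ j) (hp : 1 ≤ p)
    (h1 : infw (j * j) = infw (j * j + p))
    (h2 : infw (j * j + 1) = infw (j * j + 1 + p)) :
    ∃ i, j < i ∧ i * i = j * j + p := by
  obtain ⟨j', rfl⟩ : ∃ j', j = j' + 1 := ⟨j - 1, by omega⟩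
  set j := j' + 1
  have hsub : j - 1 = j' := by omega
  have hw1 : infw (j * j) = true := infw_eq_true hj (by rw [hsub]; show (j' + 1) * j' < (j' + 1) * (j' + 1); nlinarith) le_rfl
  have hw2 : infw (j * j + 1) = false := infw_eq_false (j := j) (by omega) (by nlinarith)
  have hw3 : infw (j * j + p) = true := h1.symm.trans hw1
  have hw4 : infw (j * j + 1 + p) = false := h2.symm.trans hw2
  unfold infw at hw3
  rw [decide_eq_true_eq] at hw3
  obtain ⟨i, hi⟩ := hw3
  simp only [Finset.mem_filter, Finset.mem_Icc] at hi
  obtain ⟨⟨hi1, _⟩, hlt, hle⟩ := hi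
  have heq : i * i = j * j + p := by
    by_contra hne
    have : j * j + 1 + p ≤ i * i := by omega
    have := infw_eq_true hi1 (by have : i - 1 ≤ i - 1 := le_rfl; omega) this
    rw [hw4] at this
    exact Bool.false_ne_true this
  refine ⟨i, ?_, heq⟩
  nlinarith

lemma infw_pair {i p : ℕ} (hi : 1 ≤ i) (hp : 1 ≤ p) :
    ∃ z, (2 * i - 1) * (2 * i - 1) ≤ z ∧ z ≤ 2 * i * (2 * i) + 1 ∧ infw z ≠ infw (z + p) := by
  by_contra h
  push_neg at h
  obtain ⟨i', rfl⟩ : ∃ i', i = i' + 1 := ⟨i - 1, by omega⟩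
  set j := 2 * (i' + 1) - 1 with hjdef
  have hjv : j = 2 * i' + 1 := by omega
  have hj1 : 1 ≤ j := by omega
  have hb1 : ∃ a, j < a ∧ a * a = j * j + p := by
    apply infw_bad hj1 hp
    · exact h (j * j) le_rfl (by rw [hjv]; nlinarith)
    · exact h (j * j + 1) (by omega) (by rw [hjv]; nlinarith)
  have hb2 : ∃ a, j + 1 < a ∧ a * a = (j + 1) * (j + 1) + p := by
    apply infw_bad (by omega) hp
    · exact h ((j + 1) * (j + 1)) (by nlinarith) (by rw [hjv]; nlinarith)
    · exact h ((j + 1) * (j + 1) + 1) (by nlinarith) (by rw [hjv]; nlinarith)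
  obtain ⟨a, ha1, ha2⟩ := hb1
  obtain ⟨b, hb1', hb2'⟩ := hb2
  have hexp : (j + 1) * (j + 1) = j * j + 2 * j + 1 := by ring
  rcases le_or_gt b a with hba | hab
  · have : b * b ≤ a * a := Nat.mul_le_mul hba hba
    omega
  · have h5 : (a + 1) * (a + 1) ≤ b * b := Nat.mul_le_mul hab hab
    have h6 : (a + 1) * (a + 1) = a * a + 2 * a + 1 := by ring
    omega

lemma infw_count {p : ℕ} (t : ℕ) (hp : 1 ≤ p) :
    t ≤ ((Finset.Icc 1 (2 * t * (2 * t) + 1)).filter fun z => infw z ≠ infw (z + p)).card := by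
  classical
  have H : ∀ i : ℕ, ∃ z, (2 * (i + 1) - 1) * (2 * (i + 1) - 1) ≤ z ∧
      z ≤ 2 * (i + 1) * (2 * (i + 1)) + 1 ∧ infw z ≠ infw (z + p) :=
    fun i => infw_pair (by omega) hp
  choose f hf1 hf2 hf3 using H
  have := Finset.card_le_card_of_injOn (fun i => f (i - 1))
    (s := Finset.Icc 1 t)
    (t := (Finset.Icc 1 (2 * t * (2 * t) + 1)).filter fun z => infw z ≠ infw (z + p))
    ?_ ?_
  · simpa using this
  · intro i hi
    simp only [Finset.mem_coe, Finset.mem_Icc] at hi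
    obtain ⟨hi1, hi2⟩ := hi
    obtain ⟨i', rfl⟩ : ∃ i', i = i' + 1 := ⟨i - 1, by omega⟩
    simp only [Nat.add_sub_cancel, Finset.mem_coe]
    refine Finset.mem_filter.mpr ⟨Finset.mem_Icc.mpr ⟨?_, ?_⟩, hf3 i'⟩
    · have := hf1 i'
      have h2 : 1 ≤ (2 * (i' + 1) - 1) * (2 * (i' + 1) - 1) := by
        have : 1 ≤ 2 * (i' + 1) - 1 := by omega
        nlinarith
      omega
    · have := hf2 i'
      have : 2 * (i' + 1) * (2 * (i' + 1)) ≤ 2 * t * (2 * t) := by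
        apply Nat.mul_le_mul <;> omega
      omega
  · have key : ∀ a b : ℕ, 1 ≤ a → a < b → f (a - 1) < f (b - 1) := by
      intro a b ha hlt
      have h1 : f (a - 1) ≤ 2 * a * (2 * a) + 1 := by
        obtain ⟨a', rfl⟩ : ∃ a', a = a' + 1 := ⟨a - 1, by omega⟩
        simpa using hf2 a'
      have h2 : (2 * b - 1) * (2 * b - 1) ≤ f (b - 1) := by
        obtain ⟨b', rfl⟩ : ∃ b', b = b' + 1 := ⟨b - 1, by omega⟩
        simpa using hf1 b'
      have h3 : 2 * a * (2 * a) + 1 < (2 * b - 1) * (2 * b - 1) := by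
        have hb' : 2 * a + 1 ≤ 2 * b - 1 := by omega
        have : (2 * a + 1) * (2 * a + 1) ≤ (2 * b - 1) * (2 * b - 1) := Nat.mul_le_mul hb' hb'
        nlinarith [ha]
      omega
    intro a ha b hb hab
    simp only [Finset.coe_Icc, Set.mem_Icc] at ha hb
    have hab' : f (a - 1) = f (b - 1) := hab
    rcases lt_trichotomy a b with h | h | h
    · exact absurd hab' (key a b ha.1 h).ne
    · exact h
    · exact absurd hab'.symm (key b a hb.1 h).ne

theorem stmt_12 (n k : ℕ) (hn : 4 ∣ n) (hk : 2 < k) (hke : 2 ∣ k)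
    (hnk : n > 4 * (18 * k + 1) * (18 * k + 2))
    (x y S : ℕ → Bool)
    (hx : ham x infw (n / 4) = k / 2)
    (hy : ham x y (n / 4) ≤ k / 2 + 1)
    (hS : ∀ z, 1 ≤ z → z ≤ n / 4 →
      S z = x z ∧ S (n / 4 + z) = y z ∧ S (2 * (n / 4) + z) = x z ∧
        S (3 * (n / 4) + z) = x z) :
    (∀ p, 1 ≤ p → p < n / 4 →
      k < ((Finset.Icc 1 (n - p)).filter fun z => S z ≠ S (z + p)).card) ∧
    (∀ p, 1 ≤ p → p ≤ n →
      ((Finset.Icc 1 (n - p)).filter fun z => S z ≠ S (z + p)).card ≤ k →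
      n / 4 ≤ p) := by
  classical
  set m := n / 4 with hmdef
  have hn4 : n = 4 * m := by omega
  have hm : (18 * k + 1) * (18 * k + 2) < m := by nlinarith [hnk, hn4]
  obtain ⟨L, hL⟩ : ∃ L, L = 2 * (2 * k + 1) * (2 * (2 * k + 1)) + 1 := ⟨_, rfl⟩
  have hLlin : L = 16 * (k * k) + 16 * k + 5 := by rw [hL]; ring
  have hLm : 2 * L + 1 ≤ m := by nlinarith [hm, hLlin]
  have hL1 : 1 ≤ L := by rw [hLlin]; linarith [Nat.zero_le (16 * (k * k))]
  -- core Hamming count for x at any small shift q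
  have hxk : ∀ q, 1 ≤ q → L + q ≤ m →
      k + 1 ≤ ((Finset.Icc 1 L).filter fun z => x z ≠ x (z + q)).card := by
    intro q hq hqm
    have hA : 2 * k + 1 ≤
        ((Finset.Icc 1 L).filter fun z => infw z ≠ infw (z + q)).card := by
      have := infw_count (p := q) (2 * k + 1) hq
      rwa [← hL] at this
    set A := (Finset.Icc 1 L).filter (fun z => infw z ≠ infw (z + q)) with hAdef
    set B := (Finset.Icc 1 L).filter (fun z => x z ≠ x (z + q)) with hBdef
    set D := (Finset.Icc 1 m).filter (fun z => x z ≠ infw z) with hDdef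
    have hD : D.card = k / 2 := hx
    have hsub : A \ B ⊆ ((Finset.Icc 1 L).filter fun z => x z ≠ infw z) ∪
        ((Finset.Icc 1 L).filter fun z => x (z + q) ≠ infw (z + q)) := by
      intro z hz
      rw [Finset.mem_sdiff, hAdef, hBdef] at hz
      obtain ⟨hz1, hz2⟩ := hz
      rw [Finset.mem_filter] at hz1
      obtain ⟨hzmem, hzne⟩ := hz1
      have hx' : x z = x (z + q) := by
        by_contra hc
        exact hz2 (Finset.mem_filter.mpr ⟨hzmem, hc⟩)
      rw [Finset.mem_union, Finset.mem_filter, Finset.mem_filter]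
      by_cases h1 : x z = infw z
      · by_cases h2 : x (z + q) = infw (z + q)
        · rw [h1, h2] at hx'
          exact absurd hx' hzne
        · exact Or.inr ⟨hzmem, h2⟩
      · exact Or.inl ⟨hzmem, h1⟩
    have hcard1 : ((Finset.Icc 1 L).filter fun z => x z ≠ infw z).card ≤ k / 2 := by
      rw [← hD]
      apply Finset.card_le_card
      intro z hz
      rw [Finset.mem_filter, Finset.mem_Icc] at hz ⊢
      exact ⟨⟨hz.1.1, by omega⟩, hz.2⟩
    have hcard2 : ((Finset.Icc 1 L).filter fun z => x (z + q) ≠ infw (z + q)).card ≤ k / 2 := by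
      rw [← hD]
      apply Finset.card_le_card_of_injOn (fun z => z + q)
      · intro z hz
        rw [Finset.mem_coe, Finset.mem_filter, Finset.mem_Icc] at hz
        rw [Finset.mem_coe, Finset.mem_filter, Finset.mem_Icc]
        beta_reduce
        exact ⟨⟨by omega, by omega⟩, hz.2⟩
      · intro a _ b _ h
        exact add_right_cancel h
    have hAB : (A \ B).card ≤ k := by
      calc (A \ B).card ≤ _ := Finset.card_le_card hsub
      _ ≤ _ + _ := Finset.card_union_le _ _
      _ ≤ k := by omega
    have hABB : A.card ≤ B.card + (A \ B).card := by
      calc A.card ≤ (B ∪ (A \ B)).card := by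
            apply Finset.card_le_card
            intro z hz
            rw [Finset.mem_union, Finset.mem_sdiff]
            by_cases hb : z ∈ B
            · exact Or.inl hb
            · exact Or.inr ⟨hz, hb⟩
      _ ≤ B.card + (A \ B).card := Finset.card_union_le _ _
    omega
  have key : ∀ p, 1 ≤ p → p < m →
      k < ((Finset.Icc 1 (n - p)).filter fun z => S z ≠ S (z + p)).card := by
    intro p hp1 hp2
    have main : ∀ q c, 1 ≤ q → L + q ≤ m → c + L + p ≤ 2 * m →
        (∀ z, 1 ≤ z → z ≤ L → x z ≠ x (z + q) →
          S (2 * m + c + z) ≠ S (2 * m + c + z + p)) →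
        k < ((Finset.Icc 1 (n - p)).filter fun z => S z ≠ S (z + p)).card := by
      intro q c hq hqm hc hmap
      have hB := hxk q hq hqm
      have hinj := Finset.card_le_card_of_injOn (fun z => 2 * m + c + z)
        (s := (Finset.Icc 1 L).filter fun z => x z ≠ x (z + q))
        (t := (Finset.Icc 1 (n - p)).filter fun z => S z ≠ S (z + p)) ?_ ?_
      · omega
      · intro z hz
        rw [Finset.mem_coe, Finset.mem_filter, Finset.mem_Icc] at hz
        obtain ⟨⟨hz1, hz2⟩, hz3⟩ := hz
        show 2 * m + c + z ∈ (Finset.Icc 1 (n - p)).filter fun z => S z ≠ S (z + p)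
        rw [Finset.mem_filter, Finset.mem_Icc]
        exact ⟨⟨by omega, by omega⟩, hmap z hz1 hz2 hz3⟩
      · intro a _ b _ h
        have : 2 * m + c + a = 2 * m + c + b := h
        omega
    by_cases hcase : p + L ≤ m
    · apply main p 0 hp1 (by omega) (by omega)
      intro z hz1 hz2 hzx
      have h1 := (hS z hz1 (by omega)).2.2.1
      have h2 := (hS (z + p) (by omega) (by omega)).2.2.1
      have e1 : 2 * m + 0 + z = 2 * m + z := by omega
      have e2 : 2 * m + 0 + z + p = 2 * m + (z + p) := by omega
      rw [e2, e1, h1, h2]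
      exact hzx
    · apply main (m - p) (m - p) (by omega) (by omega) (by omega)
      intro z hz1 hz2 hzx
      have h1 := (hS (m - p + z) (by omega) (by omega)).2.2.1
      have h2 := (hS z hz1 (by omega)).2.2.2
      have e1 : 2 * m + (m - p) + z = 2 * m + (m - p + z) := by omega
      have e2 : 2 * m + (m - p) + z + p = 3 * m + z := by omega
      rw [e2, e1, h1, h2]
      rw [show m - p + z = z + (m - p) by omega]
      exact hzx.symm
  refine ⟨key, ?_⟩
  intro p hp1 hpn hcard
  by_contra hcon
  push_neg at hcon
  exact absurd hcard (not_le.mpr (key p hp1 hcon))
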